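/- (Ping-pong lemma.) Let G be a first-countable topological group acting continuously on a topological space F, and let Γ₁, Γ₂ be infinite subgroups of G. Suppose there are nonempty, closed, disjoint subsets C₁, C₂ ⊆ F such that γ·C₂ ⊆ C₁ for every γ ∈ Γ₁ \ {1} and γ·C₁ ⊆ C₂ for every γ ∈ Γ₂ \ {1}. Then: (a) the canonical homomorphism from the free product Γ₁ ∗ Γ₂ to G induced by the two inclusions is injective; and (b) the subgroup Γ₁ ⊔ Γ₂ of G generated by Γ₁ and Γ₂ is discrete, i.e., carries the discrete topology as a subspace of G. -/

import Mathlib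

open Pointwise
open Monoid

section PingPongAux

variable {G : Type*} [Group G] (Γ₁ Γ₂ : Subgroup G)

private def pingH : Bool → Type _ := fun b => cond b ↥Γ₁ ↥Γ₂

private instance (b : Bool) : Group (pingH Γ₁ Γ₂ b) := by
  cases b
  · exact inferInstanceAs (Group ↥Γ₂)
  · exact inferInstanceAs (Group ↥Γ₁)

private def pingf : ∀ b, pingH Γ₁ Γ₂ b →* G :=
  Bool.rec Γ₂.subtype Γ₁.subtype

private def pingφ : Coprod ↥Γ₁ ↥Γ₂ →* CoprodI (pingH Γ₁ Γ₂) :=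
  Coprod.lift (CoprodI.of (M := pingH Γ₁ Γ₂) (i := true))
    (CoprodI.of (M := pingH Γ₁ Γ₂) (i := false))

private def pingψ : CoprodI (pingH Γ₁ Γ₂) →* Coprod ↥Γ₁ ↥Γ₂ :=
  CoprodI.lift (Bool.rec (Coprod.inr : ↥Γ₂ →* _) (Coprod.inl : ↥Γ₁ →* _))

private lemma pingψ_comp_φ : (pingψ Γ₁ Γ₂).comp (pingφ Γ₁ Γ₂) = MonoidHom.id _ := by
  apply Coprod.hom_ext
  · ext x
    simp only [MonoidHom.comp_apply, MonoidHom.id_apply]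
    unfold pingφ
    exact CoprodI.lift_of (M := pingH Γ₁ Γ₂) (i := true) _ x
  · ext x
    simp only [MonoidHom.comp_apply, MonoidHom.id_apply]
    unfold pingφ
    exact CoprodI.lift_of (M := pingH Γ₁ Γ₂) (i := false) _ x

private lemma pingφ_injective : Function.Injective (pingφ Γ₁ Γ₂) := by
  intro x y hxy
  have := congrArg (pingψ Γ₁ Γ₂) hxy
  rwa [← MonoidHom.comp_apply, ← MonoidHom.comp_apply, pingψ_comp_φ,
    MonoidHom.id_apply, MonoidHom.id_apply] at this

private lemma lift_comp_φ :
    (CoprodI.lift (pingf Γ₁ Γ₂)).comp (pingφ Γ₁ Γ₂) = Coprod.lift Γ₁.subtype Γ₂.subtype := by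
  apply Coprod.hom_ext
  · ext x
    simp only [MonoidHom.comp_apply]
    unfold pingφ
    rw [Coprod.lift_apply_inl]
    exact CoprodI.lift_of (M := pingH Γ₁ Γ₂) (i := true) _ x
  · ext x
    simp only [MonoidHom.comp_apply]
    unfold pingφ
    rw [Coprod.lift_apply_inr]
    exact CoprodI.lift_of (M := pingH Γ₁ Γ₂) (i := false) _ x

private lemma lift_pingf_of_true (x : ↥Γ₁) :
    CoprodI.lift (pingf Γ₁ Γ₂) (CoprodI.of (M := pingH Γ₁ Γ₂) (i := true) x) = (x : G) :=
  CoprodI.lift_of _ _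

private lemma lift_pingf_of_false (x : ↥Γ₂) :
    CoprodI.lift (pingf Γ₁ Γ₂) (CoprodI.of (M := pingH Γ₁ Γ₂) (i := false) x) = (x : G) :=
  CoprodI.lift_of _ _

private def pingX {F : Type*} (C₁ C₂ : Set F) : Bool → Set F := fun b => cond b C₁ C₂

/-- conjugating a reduced word of mixed type by a suitable letter. -/
private lemma conj_prod {ι : Type*} {H : ι → Type*} [∀ i, Group (H i)] {i j : ι}
    (hij : i ≠ j) (w : CoprodI.NeWord H i j) (b : H j) (hb1 : b ≠ 1) (hbl : b ≠ w.last) :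
    ∃ w' : CoprodI.NeWord H j j,
      w'.prod = CoprodI.of b * w.prod * (CoprodI.of b)⁻¹ := by
  have hbl' : b * w.inv.head ≠ 1 := by
    rw [CoprodI.NeWord.inv_head]
    intro h
    exact hbl (by rwa [mul_inv_eq_one] at h)
  refine ⟨CoprodI.NeWord.append (CoprodI.NeWord.singleton b hb1) hij.symm
      ((CoprodI.NeWord.mulHead w.inv b hbl').inv), ?_⟩
  simp [mul_assoc]

private lemma ping_key {F : Type*} [MulAction G F] (C₁ C₂ : Set F)
    (hpp : Pairwise fun i j => ∀ h : pingH Γ₁ Γ₂ i, h ≠ 1 →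
      pingf Γ₁ Γ₂ i h • pingX C₁ C₂ j ⊆ pingX C₁ C₂ i)
    (a₁ a₂ : ↥Γ₁) (b₁ b₂ : ↥Γ₂) (ha₁ : a₁ ≠ 1) (ha₂ : a₂ ≠ 1) (ha : a₁ ≠ a₂)
    (hb₁ : b₁ ≠ 1) (hb₂ : b₂ ≠ 1) (hb : b₁ ≠ b₂) :
    ∀ g : G, g ∈ Γ₁ ⊔ Γ₂ → g ≠ 1 →
      ∃ k ∈ ({1, ↑a₁, ↑a₂, ↑b₁, ↑b₂} : Set G),
        (k * g * k⁻¹) • C₁ ⊆ C₂ ∨ (k * g * k⁻¹) • C₂ ⊆ C₁ := by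
  classical
  intro g hg hgne
  have hrange : Γ₁ ⊔ Γ₂ ≤ (CoprodI.lift (pingf Γ₁ Γ₂)).range := by
    refine sup_le ?_ ?_
    · intro x hx
      exact ⟨CoprodI.of (M := pingH Γ₁ Γ₂) (i := true) ⟨x, hx⟩, lift_pingf_of_true _ _ _⟩
    · intro x hx
      exact ⟨CoprodI.of (M := pingH Γ₁ Γ₂) (i := false) ⟨x, hx⟩, lift_pingf_of_false _ _ _⟩
  obtain ⟨m, rfl⟩ := hrange hg
  have hm : m ≠ 1 := by rintro rfl; simp at hgne
  have hw₀ : CoprodI.Word.equiv m ≠ CoprodI.Word.empty := by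
    intro h
    apply hm
    have h2 := (CoprodI.Word.equiv (M := pingH Γ₁ Γ₂)).symm_apply_apply m
    rw [h] at h2
    have h3 : (CoprodI.Word.equiv (M := pingH Γ₁ Γ₂)).symm CoprodI.Word.empty = 1 :=
      CoprodI.Word.prod_empty
    rw [h3] at h2
    exact h2.symm
  obtain ⟨i, j, w, hw⟩ := CoprodI.NeWord.of_word _ hw₀
  have hprod : w.prod = m := by
    have h2 := (CoprodI.Word.equiv (M := pingH Γ₁ Γ₂)).symm_apply_apply m
    rw [← hw] at h2
    exact h2
  rcases i with _ | _ <;> rcases j with _ | _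
  · -- i = false, j = false : g • C₁ ⊆ C₂
    refine ⟨1, by simp, Or.inl ?_⟩
    have h4 := CoprodI.lift_word_ping_pong (pingf Γ₁ Γ₂) (pingX C₁ C₂) hpp w
      (by simp : (false : Bool) ≠ true)
    rw [hprod] at h4
    simpa [pingX] using h4
  · -- i = false, j = true : conjugate by a ∈ Γ₁
    obtain ⟨a, hane, hal, hmem⟩ :
        ∃ a : ↥Γ₁, a ≠ 1 ∧ a ≠ w.last ∧ ((a : G) = ↑a₁ ∨ (a : G) = ↑a₂) := by
      by_cases hl : a₁ = w.last
      · exact ⟨a₂, ha₂, fun h => ha (hl.trans h.symm), Or.inr rfl⟩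
      · exact ⟨a₁, ha₁, hl, Or.inl rfl⟩
    obtain ⟨w', hw'⟩ := conj_prod (by simp) w a hane hal
    refine ⟨↑a, by rcases hmem with h | h <;> simp [h], Or.inr ?_⟩
    have h4 := CoprodI.lift_word_ping_pong (pingf Γ₁ Γ₂) (pingX C₁ C₂) hpp w'
      (by simp : (true : Bool) ≠ false)
    rw [hw'] at h4
    simp only [map_mul, map_inv, lift_pingf_of_true, hprod] at h4
    simpa [pingX] using h4
  · -- i = true, j = false : conjugate by b ∈ Γ₂
    obtain ⟨b, hbne, hblast, hmem⟩ :
        ∃ b : ↥Γ₂, b ≠ 1 ∧ b ≠ w.last ∧ ((b : G) = ↑b₁ ∨ (b : G) = ↑b₂) := by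
      by_cases hl : b₁ = w.last
      · exact ⟨b₂, hb₂, fun h => hb (hl.trans h.symm), Or.inr rfl⟩
      · exact ⟨b₁, hb₁, hl, Or.inl rfl⟩
    obtain ⟨w', hw'⟩ := conj_prod (by simp) w b hbne hblast
    refine ⟨↑b, by rcases hmem with h | h <;> simp [h], Or.inl ?_⟩
    have h4 := CoprodI.lift_word_ping_pong (pingf Γ₁ Γ₂) (pingX C₁ C₂) hpp w'
      (by simp : (false : Bool) ≠ true)
    rw [hw'] at h4
    simp only [map_mul, map_inv, lift_pingf_of_false, hprod] at h4
    simpa [pingX] using h4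
  · -- i = true, j = true : g • C₂ ⊆ C₁
    refine ⟨1, by simp, Or.inr ?_⟩
    have h4 := CoprodI.lift_word_ping_pong (pingf Γ₁ Γ₂) (pingX C₁ C₂) hpp w
      (by simp : (true : Bool) ≠ false)
    rw [hprod] at h4
    simpa [pingX] using h4

end PingPongAux

/-- Ping-pong lemma (Lemma 4.1): if infinite subgroups Γ₁, Γ₂ of a first-countable
topological group acting continuously on a space F admit nonempty closed disjoint
subsets C₁, C₂ of F with γ·C₂ ⊆ C₁ for nontrivial γ ∈ Γ₁ and γ·C₁ ⊆ C₂ for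
nontrivial γ ∈ Γ₂, then ⟨Γ₁, Γ₂⟩ is discrete and decomposes as Γ₁ ∗ Γ₂. -/
theorem ping_pong {G : Type*} [Group G] [TopologicalSpace G] [IsTopologicalGroup G]
    [FirstCountableTopology G]
    {F : Type*} [TopologicalSpace F] [MulAction G F] [ContinuousSMul G F]
    (Γ₁ Γ₂ : Subgroup G) (h1 : Infinite Γ₁) (h2 : Infinite Γ₂)
    (C₁ C₂ : Set F) (hne₁ : C₁.Nonempty) (hne₂ : C₂.Nonempty)
    (hcl₁ : IsClosed C₁) (hcl₂ : IsClosed C₂) (hdisj : Disjoint C₁ C₂)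
    (hping : ∀ γ ∈ Γ₁, γ ≠ 1 → γ • C₂ ⊆ C₁)
    (hpong : ∀ γ ∈ Γ₂, γ ≠ 1 → γ • C₁ ⊆ C₂) :
    Function.Injective
        (Monoid.Coprod.lift Γ₁.subtype Γ₂.subtype :
          Monoid.Coprod Γ₁ Γ₂ →* G) ∧
      DiscreteTopology (Γ₁ ⊔ Γ₂ : Subgroup G) := by
  classical
  have hXne : ∀ b, (pingX C₁ C₂ b).Nonempty := by rintro (_ | _); exacts [hne₂, hne₁]
  have hXdisj : Pairwise (Function.onFun Disjoint (pingX C₁ C₂)) := by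
    rintro (_ | _) (_ | _) hij
    · exact absurd rfl hij
    · exact hdisj.symm
    · exact hdisj
    · exact absurd rfl hij
  have hpp : Pairwise fun i j => ∀ h : pingH Γ₁ Γ₂ i, h ≠ 1 →
      pingf Γ₁ Γ₂ i h • pingX C₁ C₂ j ⊆ pingX C₁ C₂ i := by
    rintro (_ | _) (_ | _) hij h hh
    · exact absurd rfl hij
    · exact hpong _ (SetLike.coe_mem (h : ↥Γ₂)) fun e => hh (OneMemClass.coe_eq_one.mp e)
    · exact hping _ (SetLike.coe_mem (h : ↥Γ₁)) fun e => hh (OneMemClass.coe_eq_one.mp e)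
    · exact absurd rfl hij
  have h3 : (3 : Cardinal) ≤ Cardinal.aleph0 := by
    exact_mod_cast (Cardinal.nat_lt_aleph0 3).le
  have hcard₁ : 3 ≤ Cardinal.mk ↥Γ₁ := h3.trans (Cardinal.aleph0_le_mk ↥Γ₁)
  have hcard₂ : 3 ≤ Cardinal.mk ↥Γ₂ := h3.trans (Cardinal.aleph0_le_mk ↥Γ₂)
  have hinj := Monoid.CoprodI.lift_injective_of_ping_pong (pingf Γ₁ Γ₂)
    (Or.inr ⟨true, hcard₁⟩) (pingX C₁ C₂) hXne hXdisj hpp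
  constructor
  · have hco : ⇑(Monoid.Coprod.lift Γ₁.subtype Γ₂.subtype) =
        ⇑(Monoid.CoprodI.lift (pingf Γ₁ Γ₂)) ∘ ⇑(pingφ Γ₁ Γ₂) := by
      rw [← lift_comp_φ]; rfl
    rw [hco]
    exact hinj.comp (pingφ_injective Γ₁ Γ₂)
  · obtain ⟨a₁, ha₁, -⟩ := Cardinal.three_le hcard₁ 1 1
    obtain ⟨a₂, ha₂1, ha₂⟩ := Cardinal.three_le hcard₁ 1 a₁
    obtain ⟨b₁, hb₁, -⟩ := Cardinal.three_le hcard₂ 1 1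
    obtain ⟨b₂, hb₂1, hb₂⟩ := Cardinal.three_le hcard₂ 1 b₁
    have key := ping_key Γ₁ Γ₂ C₁ C₂ hpp a₁ a₂ b₁ b₂ ha₁ ha₂1 ha₂.symm hb₁ hb₂1 hb₂.symm
    obtain ⟨x₁, hx₁⟩ := hne₁
    obtain ⟨x₂, hx₂⟩ := hne₂
    set S : Set G := {1, ↑a₁, ↑a₂, ↑b₁, ↑b₂} with hS
    have hSfin : S.Finite := Set.toFinite S
    set D : Set G := ⋃ k ∈ S,
      ({g : G | (k * g * k⁻¹) • x₁ ∈ C₂} ∪ {g : G | (k * g * k⁻¹) • x₂ ∈ C₁}) with hD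
    have hDclosed : IsClosed D := by
      refine hSfin.isClosed_biUnion fun k _ => IsClosed.union ?_ ?_
      · exact hcl₂.preimage
          (((continuous_const.mul continuous_id).mul continuous_const).smul continuous_const)
      · exact hcl₁.preimage
          (((continuous_const.mul continuous_id).mul continuous_const).smul continuous_const)
    have h1D : (1 : G) ∉ D := by
      intro hmem
      simp only [hD, Set.mem_iUnion, Set.mem_union, Set.mem_setOf_eq, mul_one,
        mul_inv_cancel, one_smul] at hmem
      rcases hmem with ⟨k, -, h | h⟩
      · exact Set.disjoint_left.mp hdisj hx₁ h
      · exact Set.disjoint_right.mp hdisj hx₂ h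
    have hsubD : ((Γ₁ ⊔ Γ₂ : Subgroup G) : Set G) \ {1} ⊆ D := by
      rintro g ⟨hg, hg1⟩
      obtain ⟨k, hkS, hcase⟩ := key g hg (by simpa using hg1)
      refine Set.mem_biUnion hkS ?_
      rcases hcase with h | h
      · exact Or.inl (h (Set.smul_mem_smul_set hx₁))
      · exact Or.inr (h (Set.smul_mem_smul_set hx₂))
    have hopen : IsOpen ({1} : Set ↥(Γ₁ ⊔ Γ₂)) := by
      have heq : ({1} : Set ↥(Γ₁ ⊔ Γ₂)) = (Subtype.val) ⁻¹' Dᶜ := by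
        ext x
        simp only [Set.mem_singleton_iff, Set.mem_preimage, Set.mem_compl_iff]
        constructor
        · rintro rfl
          simpa using h1D
        · intro hx
          by_contra hx1
          refine hx (hsubD ⟨x.2, ?_⟩)
          simp only [Set.mem_singleton_iff]
          exact fun e => hx1 (Subtype.ext (by simpa using e))
      rw [heq]
      exact hDclosed.isOpen_compl.preimage continuous_subtype_val
    exact discreteTopology_of_isOpen_singleton_one hopen
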